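/- Let P be a finite set of points in ℝ^d, ω : P → [0,∞) a weight assignment, and p ∈ P a point whose weighted Voronoi cell Vor_ω(p) is bounded. If every d-simplex of Del_ω(P) containing p is δ²-power protected for some δ > 0, then no simplex of Del_ω(P) containing p is degenerate, i.e., every σ ∈ Del_ω(P) with p ∈ σ has affinely independent vertices. -/

import Mathlib

noncomputable section

/-- Weighted Voronoi cell of `p` among the points of `P`. -/
def vorCell {d : ℕ} (P : Finset (EuclideanSpace ℝ (Fin d))) (ω : EuclideanSpace ℝ (Fin d) → ℝ)
    (p : EuclideanSpace ℝ (Fin d)) : Set (EuclideanSpace ℝ (Fin d)) :=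
  {x | ∀ q ∈ P, ‖x - p‖ ^ 2 - ω p ^ 2 ≤ ‖x - q‖ ^ 2 - ω q ^ 2}

/-- Weighted Voronoi face of a simplex `σ`. -/
def vorFace {d : ℕ} (P : Finset (EuclideanSpace ℝ (Fin d))) (ω : EuclideanSpace ℝ (Fin d) → ℝ)
    (σ : Finset (EuclideanSpace ℝ (Fin d))) : Set (EuclideanSpace ℝ (Fin d)) :=
  ⋂ p ∈ σ, vorCell P ω p

/-- `σ` is `δ²`-power protected at `c`. -/
def powerProtectedAt {d : ℕ} (P : Finset (EuclideanSpace ℝ (Fin d)))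
    (ω : EuclideanSpace ℝ (Fin d) → ℝ) (σ : Finset (EuclideanSpace ℝ (Fin d)))
    (c : EuclideanSpace ℝ (Fin d)) (δsq : ℝ) : Prop :=
  ∀ q ∈ P, q ∉ σ → ∀ p ∈ σ, ‖p - c‖ ^ 2 - ω p ^ 2 + δsq < ‖q - c‖ ^ 2 - ω q ^ 2

/-- Power distance. -/
def pw {d : ℕ} (ω : EuclideanSpace ℝ (Fin d) → ℝ) (q x : EuclideanSpace ℝ (Fin d)) : ℝ :=
  ‖x - q‖ ^ 2 - ω q ^ 2

lemma pw_diff {d : ℕ} (ω : EuclideanSpace ℝ (Fin d) → ℝ) (x q r : EuclideanSpace ℝ (Fin d)) :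
    pw ω q x - pw ω r x
      = (‖q‖ ^ 2 - ω q ^ 2) - (‖r‖ ^ 2 - ω r ^ 2) - 2 * (inner ℝ x (q - r) : ℝ) := by
  simp only [pw, @norm_sub_sq_real, inner_sub_right]
  ring

lemma mem_vorCell_iff {d : ℕ} {P : Finset (EuclideanSpace ℝ (Fin d))}
    {ω : EuclideanSpace ℝ (Fin d) → ℝ} {r x : EuclideanSpace ℝ (Fin d)} :
    x ∈ vorCell P ω r ↔ ∀ q ∈ P, pw ω r x ≤ pw ω q x := Iff.rfl

lemma mem_vorFace_iff {d : ℕ} {P σ : Finset (EuclideanSpace ℝ (Fin d))}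
    {ω : EuclideanSpace ℝ (Fin d) → ℝ} {x : EuclideanSpace ℝ (Fin d)} :
    x ∈ vorFace P ω σ ↔ ∀ r ∈ σ, ∀ q ∈ P, pw ω r x ≤ pw ω q x := by
  simp [vorFace, mem_vorCell_iff]

lemma continuous_pw {d : ℕ} (ω : EuclideanSpace ℝ (Fin d) → ℝ) (q : EuclideanSpace ℝ (Fin d)) :
    Continuous (fun x => pw ω q x) :=
  (((continuous_id.sub continuous_const).norm.pow 2).sub continuous_const)

lemma isClosed_vorFace {d : ℕ} (P σ : Finset (EuclideanSpace ℝ (Fin d)))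
    (ω : EuclideanSpace ℝ (Fin d) → ℝ) : IsClosed (vorFace P ω σ) := by
  refine isClosed_biInter fun r hr => ?_
  have : vorCell P ω r = ⋂ q ∈ (P : Set _), {x | pw ω r x ≤ pw ω q x} := by
    ext x; simp [mem_vorCell_iff]
  rw [this]
  exact isClosed_biInter fun q hq => isClosed_le (continuous_pw ω r) (continuous_pw ω q)

theorem no_degenerate_simplices
    (d : ℕ) (P : Finset (EuclideanSpace ℝ (Fin d)))
    (ω : EuclideanSpace ℝ (Fin d) → ℝ) (hω : ∀ q ∈ P, 0 ≤ ω q)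
    (p : EuclideanSpace ℝ (Fin d)) (hp : p ∈ P)
    (hbdd : Bornology.IsBounded (vorCell P ω p))
    (δ : ℝ) (hδ : 0 < δ)
    (hprot : ∀ σ : Finset (EuclideanSpace ℝ (Fin d)), σ ⊆ P → p ∈ σ → σ.card = d + 1 →
      (vorFace P ω σ).Nonempty → ∃ c ∈ vorFace P ω σ, powerProtectedAt P ω σ c (δ ^ 2)) :
    ∀ σ : Finset (EuclideanSpace ℝ (Fin d)), σ ⊆ P → p ∈ σ → (vorFace P ω σ).Nonempty →
      AffineIndependent ℝ ((↑) : {x // x ∈ σ} → EuclideanSpace ℝ (Fin d)) := by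
  classical
  intro σ hσP hpσ hne
  -- the face is compact
  have hKsub : vorFace P ω σ ⊆ vorCell P ω p := Set.biInter_subset_of_mem hpσ
  have hKcp : IsCompact (vorFace P ω σ) :=
    Metric.isCompact_of_isClosed_isBounded (isClosed_vorFace P σ ω) (hbdd.subset hKsub)
  obtain ⟨c, hcK, hcext⟩ := hKcp.extremePoints_nonempty hne
  have hcp : c ∈ vorCell P ω p := hKsub hcK
  set τ : Finset (EuclideanSpace ℝ (Fin d)) := P.filter (fun q => pw ω q c = pw ω p c) with hτdef
  have hτP : τ ⊆ P := Finset.filter_subset _ _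
  have hpτ : p ∈ τ := Finset.mem_filter.2 ⟨hp, rfl⟩
  have hcKface := mem_vorFace_iff.1 hcK
  have hστ : σ ⊆ τ := by
    intro r hr
    refine Finset.mem_filter.2 ⟨hσP hr, le_antisymm (hcKface r hr p hp) (hcp r (hσP hr))⟩
  have hτeq : ∀ q ∈ τ, pw ω q c = pw ω p c := fun q hq => (Finset.mem_filter.1 hq).2
  have hτlt : ∀ q ∈ P, q ∉ τ → pw ω p c < pw ω q c := by
    intro q hq hqτ
    rcases eq_or_lt_of_le (hcp q hq) with h | h
    · exact absurd (Finset.mem_filter.2 ⟨hq, h.symm⟩) hqτ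
    · exact h
  -- the points power-equidistant from c affinely span the whole space
  have hW : Submodule.span ℝ ((fun q => q - p) '' (τ : Set (EuclideanSpace ℝ (Fin d)))) = ⊤ := by
    by_contra hWne
    have hbot : (Submodule.span ℝ
        ((fun q => q - p) '' (τ : Set (EuclideanSpace ℝ (Fin d)))))ᗮ ≠ ⊥ := by
      intro h
      exact hWne (Submodule.orthogonal_eq_bot_iff.1 h)
    obtain ⟨v, hvW, hv0⟩ := Submodule.exists_mem_ne_zero_of_ne_bot hbot
    have hvperp : ∀ q ∈ τ, (inner ℝ v (q - p) : ℝ) = 0 := by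
      intro q hq
      exact (Submodule.mem_orthogonal' _ v).1 hvW _ (Submodule.subset_span ⟨q, hq, rfl⟩)
    -- an open neighborhood where the strict inequalities persist
    set U : Set (EuclideanSpace ℝ (Fin d)) :=
      ⋂ q ∈ (P \ τ), {x | pw ω p x < pw ω q x} with hUdef
    have hUopen : IsOpen U := by
      refine isOpen_biInter_finset fun q hq => ?_
      exact isOpen_lt (continuous_pw ω p) (continuous_pw ω q)
    have hcU : c ∈ U := by
      refine Set.mem_iInter₂.2 fun q hq => ?_
      obtain ⟨hqP, hqτ⟩ := Finset.mem_sdiff.1 hq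
      exact hτlt q hqP hqτ
    obtain ⟨ε, hε, hball⟩ := Metric.isOpen_iff.1 hUopen c hcU
    -- membership of perturbed points in the face
    have hmem : ∀ s : ℝ, c + s • v ∈ U → c + s • v ∈ vorFace P ω σ := by
      intro s hsU
      have heqτ : ∀ r ∈ τ, pw ω r (c + s • v) = pw ω p (c + s • v) := by
        intro r hr
        have e1 := pw_diff ω (c + s • v) r p
        have e2 := pw_diff ω c r p
        have h3 : (inner ℝ (c + s • v) (r - p) : ℝ) = inner ℝ c (r - p) + s * inner ℝ v (r - p) := by
          rw [inner_add_left, real_inner_smul_left]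
        have h4 := hvperp r hr
        have h5 := hτeq r hr
        have h6 : pw ω r c - pw ω p c = 0 := by rw [h5]; ring
        rw [h3, h4] at e1
        linarith
      rw [mem_vorFace_iff]
      intro r hr q hq
      by_cases hqτ : q ∈ τ
      · rw [heqτ r (hστ hr), heqτ q hqτ]
      · have hlt : pw ω p (c + s • v) < pw ω q (c + s • v) :=
          Set.mem_iInter₂.1 hsU q (Finset.mem_sdiff.2 ⟨hq, hqτ⟩)
        rw [heqτ r (hστ hr)]
        exact le_of_lt hlt
    set t : ℝ := ε / (2 * ‖v‖) with htdef
    have hvnorm : 0 < ‖v‖ := norm_pos_iff.2 hv0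
    have ht0 : 0 < t := div_pos hε (by positivity)
    have hdist : ∀ s : ℝ, |s| = t → c + s • v ∈ Metric.ball c ε := by
      intro s hs
      have : dist (c + s • v) c = |s| * ‖v‖ := by
        rw [dist_eq_norm]
        simp [norm_smul, Real.norm_eq_abs]
      rw [Metric.mem_ball, this, hs, htdef]
      rw [div_mul_eq_mul_div, mul_comm]
      rw [mul_comm 2 ‖v‖, ← div_div]
      calc ‖v‖ * ε / ‖v‖ / 2 = ε / 2 := by rw [mul_comm, mul_div_assoc, div_self (ne_of_gt hvnorm), mul_one]
        _ < ε := by linarith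
    have hx1 : c + (-t) • v ∈ vorFace P ω σ :=
      hmem _ (hball (hdist (-t) (by rw [abs_neg, abs_of_pos ht0])))
    have hx2 : c + t • v ∈ vorFace P ω σ :=
      hmem _ (hball (hdist t (abs_of_pos ht0)))
    have hseg : c ∈ openSegment ℝ (c + (-t) • v) (c + t • v) := by
      refine ⟨1/2, 1/2, by norm_num, by norm_num, by norm_num, ?_⟩
      module
    have := hcext hx2 hx1 (by rw [openSegment_symm]; exact hseg)
    have htv : t • v = 0 := by
      have h := left_eq_add.1 this.symm
      exact h
    rcases smul_eq_zero.1 htv with h | h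
    · exact absurd h (ne_of_gt ht0)
    · exact absurd h hv0
  -- extract an affine basis from τ containing p
  obtain ⟨b, hbsub, hbspan, hbli⟩ :=
    exists_linearIndependent ℝ ((fun q => q - p) '' (τ : Set (EuclideanSpace ℝ (Fin d))))
  have hbspan' : Submodule.span ℝ b = ⊤ := by rw [hbspan, hW]
  have hbfin : b.Finite := (((τ : Set (EuclideanSpace ℝ (Fin d))).toFinite).image _).subset hbsub
  have hb0 : ∀ w ∈ b, w ≠ (0 : EuclideanSpace ℝ (Fin d)) := fun w hw => hbli.ne_zero ⟨w, hw⟩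
  set τ' : Finset (EuclideanSpace ℝ (Fin d)) :=
    insert p (hbfin.toFinset.image (fun w => w + p)) with hτ'def
  have hτ'τ : τ' ⊆ τ := by
    intro q hq
    rcases Finset.mem_insert.1 hq with rfl | hq
    · exact hpτ
    · obtain ⟨w, hw, rfl⟩ := Finset.mem_image.1 hq
      have hw' : w ∈ b := hbfin.mem_toFinset.1 hw
      obtain ⟨q', hq', hq'e⟩ := hbsub hw'
      have : w + p = q' := by
        have : q' - p = w := hq'e
        rw [← this]; abel
      rw [this]
      exact hq'
  have hτ'P : τ' ⊆ P := hτ'τ.trans hτP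
  have hpτ' : p ∈ τ' := Finset.mem_insert_self _ _
  -- cardinality of τ'
  haveI : Fintype b := hbfin.fintype
  have hcardb : Fintype.card b = d := by
    let B : Module.Basis b ℝ (EuclideanSpace ℝ (Fin d)) :=
      Module.Basis.mk hbli (by rw [Subtype.range_coe, hbspan'])
    have := Module.finrank_eq_card_basis B
    rw [finrank_euclideanSpace_fin] at this
    exact this.symm
  have hcard : τ'.card = d + 1 := by
    have hpni : p ∉ hbfin.toFinset.image (fun w => w + p) := by
      intro hmem
      obtain ⟨w, hw, hwe⟩ := Finset.mem_image.1 hmem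
      have hw0 : w = 0 := by
        have : w = p - p := eq_sub_of_add_eq hwe
        simpa using this
      exact hb0 w (hbfin.mem_toFinset.1 hw) hw0
    rw [hτ'def, Finset.card_insert_of_notMem hpni, Finset.card_image_of_injective _
      (add_left_injective p), Set.Finite.card_toFinset, hcardb]
  -- affine independence of τ'
  have hai : AffineIndependent ℝ ((↑) : (↑τ' : Set (EuclideanSpace ℝ (Fin d))) →
      EuclideanSpace ℝ (Fin d)) := by
    have h := (linearIndependent_set_iff_affineIndependent_vadd_union_singleton ℝ hb0 p).1 hbli
    have hset : (↑τ' : Set (EuclideanSpace ℝ (Fin d)))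
        = {p} ∪ (fun w => w +ᵥ p) '' b := by
      simp only [hτ'def, Finset.coe_insert, Finset.coe_image, Set.Finite.coe_toFinset,
        Set.singleton_union, vadd_eq_add]
    rw [hset]
    exact h
  by_cases hττ' : τ ⊆ τ'
  · exact hai.mono (show (↑σ : Set (EuclideanSpace ℝ (Fin d))) ⊆ ↑τ' from
      Finset.coe_subset.2 (hστ.trans hττ'))
  · exfalso
    obtain ⟨q0, hq0τ, hq0τ'⟩ := Finset.not_subset.1 hττ'
    have hcτ' : c ∈ vorFace P ω τ' := by
      rw [mem_vorFace_iff]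
      intro r hr q hq
      rw [hτeq r (hτ'τ hr)]
      exact hcp q hq
    obtain ⟨c', hc'F, hc'prot⟩ := hprot τ' hτ'P hpτ' hcard ⟨c, hcτ'⟩
    have hc'face := mem_vorFace_iff.1 hc'F
    -- c' = c
    have hkey : ∀ q ∈ τ', (inner ℝ (c' - c) (q - p) : ℝ) = 0 := by
      intro q hq
      have h1 : pw ω q c' = pw ω p c' :=
        le_antisymm (hc'face q hq p (hτ'P hpτ')) (hc'face p hpτ' q (hτ'P hq))
      have h2 : pw ω q c = pw ω p c := hτeq q (hτ'τ hq)
      have e1 := pw_diff ω c' q p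
      have e2 := pw_diff ω c q p
      rw [inner_sub_left]
      have : (inner ℝ c' (q - p) : ℝ) = inner ℝ c (q - p) := by linarith
      rw [this]; ring
    have hortho : c' - c ∈ (Submodule.span ℝ b)ᗮ := by
      rw [Submodule.mem_orthogonal']
      intro u hu
      induction hu using Submodule.span_induction with
      | mem w hw =>
        obtain ⟨q', hq', hq'e⟩ := hbsub hw
        have hqτ' : w + p ∈ τ' := by
          refine Finset.mem_insert.2 (Or.inr (Finset.mem_image.2 ⟨w, hbfin.mem_toFinset.2 hw, rfl⟩))
        have := hkey (w + p) hqτ'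
        simpa using this
      | zero => simp
      | add x y _ _ hx hy => rw [inner_add_right, hx, hy]; ring
      | smul a x _ hx => rw [inner_smul_right, hx]; ring
    rw [hbspan', Submodule.top_orthogonal_eq_bot, Submodule.mem_bot, sub_eq_zero] at hortho
    have hpro := hc'prot q0 (hτP hq0τ) hq0τ' p hpτ'
    rw [hortho] at hpro
    have h1 : pw ω q0 c = pw ω p c := hτeq q0 hq0τ
    simp only [pw] at h1
    rw [norm_sub_rev p c, norm_sub_rev q0 c] at hpro
    nlinarith [pow_pos hδ 2]
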